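/- Fix b ≥ 1. For c ∈ {0,1} define the density matrix ρ_c = (1/2^{2b−1}) · Σ_{a0,a1 ∈ {0,1}^b with |a0|+|a1| ≡ c (mod 2)} |Ψ_{a0 a1}⟩⟨Ψ_{a0 a1}|, where |a| denotes the Hamming weight of the string a. Then ‖ρ0 − ρ1‖_tr = 2 / 2^b. -/

import Mathlib

open ComplexOrder Matrix

/-- The state `Ψ_{a0 a1} = (1/√2)(|0⟩⊗|a0⟩ + |1⟩⊗|a1⟩)` in `ℂ² ⊗ ℂ^{2^b}`,
written as a vector indexed by the standard basis `Bool × (Fin b → Bool)`. -/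
noncomputable def Psi (b : ℕ) (a0 a1 : Fin b → Bool) : Bool × (Fin b → Bool) → ℂ :=
  fun p =>
    ((if p = (false, a0) then 1 else 0) + (if p = (true, a1) then 1 else 0)) /
      (Real.sqrt 2 : ℂ)

/-- Hamming weight of a bit string. -/
def wt {b : ℕ} (a : Fin b → Bool) : ℕ := (Finset.univ.filter fun k => a k = true).card

/-- The density matrix `ρ_c = (1/2^{2b-1}) Σ_{|a0|+|a1| ≡ c (mod 2)} |Ψ_{a0 a1}⟩⟨Ψ_{a0 a1}|`,
where `c : Bool` encodes the parity (`false ↔ 0`, `true ↔ 1`). -/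
noncomputable def rhoPar (b : ℕ) (c : Bool) :
    Matrix (Bool × (Fin b → Bool)) (Bool × (Fin b → Bool)) ℂ :=
  (1 / 2 ^ (2 * b - 1) : ℂ) •
    ∑ p ∈ Finset.univ.filter
        (fun p : (Fin b → Bool) × (Fin b → Bool) =>
          (wt p.1 + wt p.2) % 2 = (if c then 1 else 0)),
      Matrix.vecMulVec (Psi b p.1 p.2) (star (Psi b p.1 p.2))

lemma wt_update {b : ℕ} (a : Fin b → Bool) (i : Fin b) :
    ((-1 : ℂ)) ^ wt (Function.update a i (!a i)) = -((-1 : ℂ)) ^ wt a := by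
  have key : ∀ c : Fin b → Bool, ((-1:ℂ)) ^ wt c = ∏ k, (if c k then (-1:ℂ) else 1) := by
    intro c
    rw [wt, ← Finset.prod_const, Finset.prod_filter]
  rw [key, key]
  rw [← Finset.prod_erase_mul _ _ (Finset.mem_univ i),
      ← Finset.prod_erase_mul _ _ (Finset.mem_univ i)]
  rw [Finset.prod_congr rfl (fun k hk => by
    rw [Function.update_of_ne (Finset.ne_of_mem_erase hk)])]
  rw [Function.update_self]
  cases h : a i <;> simp [h] <;> ring
lemma signsum {b : ℕ} (hb : 1 ≤ b) : ∑ a : Fin b → Bool, ((-1 : ℂ)) ^ wt a = 0 := by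
  have i0 : Fin b := ⟨0, hb⟩
  apply Finset.sum_involution (fun a _ => Function.update a i0 (!a i0))
  · intro a _; rw [wt_update]; ring
  · intro a _ _ h
    have := congrFun h i0
    simp at this
  · intro a _
    funext k
    by_cases hk : k = i0
    · subst hk; simp
    · simp [hk]
  · intro a _; simp
/-- the auxiliary sign matrix -/
noncomputable def Fm (b : ℕ) : Matrix (Bool × (Fin b → Bool)) (Bool × (Fin b → Bool)) ℂ :=
  fun p q => if p.1 = q.1 then 0 else (-1 : ℂ) ^ (wt p.2 + wt q.2)

noncomputable def Gm (b : ℕ) : Matrix (Bool × (Fin b → Bool)) (Bool × (Fin b → Bool)) ℂ :=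
  fun p q => if p.1 = q.1 then (-1 : ℂ) ^ (wt p.2 + wt q.2) else 0
lemma diff_eq (b : ℕ) :
    rhoPar b false - rhoPar b true
      = (1 / 2 ^ (2 * b - 1) : ℂ) •
          ∑ p : (Fin b → Bool) × (Fin b → Bool),
            ((-1 : ℂ)) ^ (wt p.1 + wt p.2) •
              Matrix.vecMulVec (Psi b p.1 p.2) (star (Psi b p.1 p.2)) := by
  rw [rhoPar, rhoPar, ← smul_sub]
  congr 1
  rw [Finset.sum_filter, Finset.sum_filter, ← Finset.sum_sub_distrib]
  apply Finset.sum_congr rfl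
  intro p _
  rcases Nat.even_or_odd (wt p.1 + wt p.2) with h | h
  · rw [Even.neg_one_pow h]
    rw [Nat.even_iff] at h
    simp [h]
  · rw [Odd.neg_one_pow h]
    rw [Nat.odd_iff] at h
    simp [h]
lemma psiSum {b : ℕ} (hb : 1 ≤ b) (c d : Bool) (x y : Fin b → Bool) :
    ∑ p : (Fin b → Bool) × (Fin b → Bool),
        ((-1 : ℂ)) ^ (wt p.1 + wt p.2) *
          (Psi b p.1 p.2 (c, x) * star (Psi b p.1 p.2 (d, y)))
      = if c = d then 0 else ((-1 : ℂ)) ^ (wt x + wt y) / 2 := by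
  have h2 : ((Real.sqrt 2 : ℝ) : ℂ) * ((Real.sqrt 2 : ℝ) : ℂ) = 2 := by
    rw [← Complex.ofReal_mul, Real.mul_self_sqrt (by norm_num)]
    norm_num
  rw [Fintype.sum_prod_type]
  cases c <;> cases d <;>
    simp [Psi, Prod.mk.injEq, star_div₀, star_add, apply_ite, Complex.star_def,
      Complex.conj_ofReal, div_mul_div_comm, h2, mul_ite, ite_mul,
      Finset.mul_sum, Finset.sum_ite_eq, Finset.sum_ite_eq', pow_add,
      ← Finset.sum_mul, ← Finset.mul_sum, signsum hb] <;>
    (try (simp only [mul_ite, mul_zero, ite_div, zero_div, Finset.sum_ite_eq,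
      Finset.mem_univ, if_true]))
  · ring
  · rw [Finset.sum_comm]
    simp only [Finset.sum_ite_eq, Finset.mem_univ, if_true]
    ring
  · by_cases hxy : x = y <;>
      simp [hxy, ← Finset.sum_mul, signsum hb]
lemma cardfun (b : ℕ) : (Fintype.card (Fin b → Bool)) = 2 ^ b := by
  simp

lemma sgn_mul (m n k : ℕ) : ((-1 : ℂ)) ^ (m + k) * (-1) ^ (k + n) = (-1) ^ (m + n) := by
  have h : ((-1 : ℂ)) ^ k * (-1) ^ k = 1 := by
    rw [← pow_add]; exact Even.neg_one_pow ⟨k, rfl⟩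
  rw [pow_add, pow_add, pow_add]
  linear_combination ((-1 : ℂ)) ^ m * (-1) ^ n * h

lemma Fm_mul_Fm (b : ℕ) : Fm b * Fm b = (2 ^ b : ℂ) • Gm b := by
  ext ⟨c, x⟩ ⟨d, y⟩
  simp only [mul_apply, Fm, Gm, Matrix.smul_apply, smul_eq_mul, Fintype.sum_prod_type]
  rw [Fintype.sum_bool]
  cases c <;> cases d <;>
    simp [sgn_mul, Finset.sum_const, cardfun b]

lemma Gm_mul_Fm (b : ℕ) : Gm b * Fm b = (2 ^ b : ℂ) • Fm b := by
  ext ⟨c, x⟩ ⟨d, y⟩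
  simp only [mul_apply, Fm, Gm, Matrix.smul_apply, smul_eq_mul, Fintype.sum_prod_type]
  rw [Fintype.sum_bool]
  cases c <;> cases d <;>
    simp [sgn_mul, Finset.sum_const, cardfun b]

lemma Fm_cube (b : ℕ) : Fm b * Fm b * Fm b = ((2 : ℂ) ^ (2 * b)) • Fm b := by
  rw [Fm_mul_Fm, smul_mul_assoc, Gm_mul_Fm, smul_smul, ← pow_add, two_mul]

lemma trace_Gm (b : ℕ) : trace (Gm b) = (2 : ℂ) ^ (b + 1) := by
  rw [trace]
  simp only [diag_apply, Gm, if_pos rfl]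
  rw [Fintype.sum_prod_type, Fintype.sum_bool]
  have : ∀ x : Fin b → Bool, ((-1 : ℂ)) ^ (wt x + wt x) = 1 := fun x =>
    Even.neg_one_pow ⟨wt x, rfl⟩
  simp [this, Finset.sum_const, cardfun b]
  ring

lemma trace_Fm_sq (b : ℕ) : trace (Fm b * Fm b) = (2 : ℂ) ^ (2 * b + 1) := by
  rw [Fm_mul_Fm, trace_smul, trace_Gm, smul_eq_mul, ← pow_add, two_mul]
  ring_nf
lemma keyA {b : ℕ} (hb : 1 ≤ b) :
    rhoPar b false - rhoPar b true = (1 / 2 ^ (2 * b) : ℂ) • Fm b := by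
  rw [diff_eq]
  ext p q
  obtain ⟨c, x⟩ := p; obtain ⟨d, y⟩ := q
  simp only [Matrix.smul_apply, Matrix.sum_apply, smul_eq_mul,
    vecMulVec_apply, Pi.star_apply, Fm]
  rw [psiSum hb c d x y]
  have hpow : (2 : ℂ) ^ (2 * b) = 2 ^ (2 * b - 1) * 2 := by
    rw [← pow_succ]; congr 1; omega
  by_cases hcd : c = d
  · simp [hcd]
  · simp only [hcd, if_neg, ite_false]
    rw [hpow]
    have h1 : (2 : ℂ) ^ (2 * b - 1) ≠ 0 := by positivity
    field_simp

/-- `‖ρ0 - ρ1‖_tr = 2 / 2^b`, where the trace norm of the Hermitian matrix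
`ρ0 - ρ1` is the sum of the absolute values of its eigenvalues. -/
theorem stmt4 (b : ℕ) (hb : 1 ≤ b)
    (hH : (rhoPar b false - rhoPar b true).IsHermitian) :
    ∑ i, |hH.eigenvalues i| = 2 / 2 ^ b := by
  set A := rhoPar b false - rhoPar b true with hAdef
  have hA : A = (1 / 2 ^ (2 * b) : ℂ) • Fm b := keyA hb
  have h2b : (2 : ℂ) ^ (2 * b) ≠ 0 := by positivity
  -- A³ = (1/2^(2b)) • A
  have hA3 : A * A * A = (1 / 2 ^ (2 * b) : ℂ) • A := by
    rw [hA]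
    simp only [smul_mul_assoc, mul_smul_comm, smul_smul]
    rw [Fm_cube, smul_smul]
    congr 1
    field_simp
  -- trace A² = 2 / 2^(2b)
  have htr : trace (A * A) = (2 : ℂ) / 2 ^ (2 * b) := by
    rw [hA, smul_mul_assoc, mul_smul_comm, trace_smul, trace_smul, trace_Fm_sq,
      smul_eq_mul, smul_eq_mul]
    rw [pow_succ]
    field_simp
  -- each eigenvalue t satisfies t^3 = t / 2^(2b)
  have heig : ∀ i, (hH.eigenvalues i) ^ 3 = (1 / 2 ^ (2 * b) : ℝ) * hH.eigenvalues i := by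
    intro i
    set t : ℝ := hH.eigenvalues i with ht
    have hv := hH.mulVec_eigenvectorBasis i
    obtain ⟨x0, hx0⟩ : ∃ x,
        (WithLp.equiv 2 (Bool × (Fin b → Bool) → ℂ)) (hH.eigenvectorBasis i) x ≠ 0 := by
      by_contra h
      push_neg at h
      exact hH.eigenvectorBasis.orthonormal.ne_zero i (by ext x; exact h x)
    have hv3 : (A * A * A) *ᵥ ⇑(hH.eigenvectorBasis i)
        = t • t • t • ⇑(hH.eigenvectorBasis i) := by
      rw [← Matrix.mulVec_mulVec, ← Matrix.mulVec_mulVec, hv, Matrix.mulVec_smul, hv,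
        Matrix.mulVec_smul, Matrix.mulVec_smul, hv]
    rw [hA3, Matrix.smul_mulVec, hv] at hv3
    have hx := congrFun hv3 x0
    simp only [Pi.smul_apply, Complex.real_smul, smul_eq_mul] at hx
    have hc : (t : ℂ) ^ 3 = (1 / 2 ^ (2 * b) : ℂ) * t := by
      have := mul_right_cancel₀ hx0 (by show _ * (hH.eigenvectorBasis i).ofLp x0 = _ * (hH.eigenvectorBasis i).ofLp x0; linear_combination -hx :
        ((t:ℂ) * ((t:ℂ) * (t:ℂ))) *
            (WithLp.equiv 2 (Bool × (Fin b → Bool) → ℂ)) (hH.eigenvectorBasis i) x0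
          = ((1 / 2 ^ (2 * b) : ℂ) * t) *
            (WithLp.equiv 2 (Bool × (Fin b → Bool) → ℂ)) (hH.eigenvectorBasis i) x0)
      linear_combination this
    have hr : ((t ^ 3 : ℝ) : ℂ) = ((1 / 2 ^ (2 * b) * t : ℝ) : ℂ) := by
      push_cast
      linear_combination hc
    exact Complex.ofReal_inj.mp hr
  -- |t| = 2^b * t²
  have habs : ∀ i, |hH.eigenvalues i| = 2 ^ b * (hH.eigenvalues i) ^ 2 := by
    intro i
    set t : ℝ := hH.eigenvalues i with ht
    have h3 := heig i
    rcases eq_or_ne t 0 with h0 | h0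
    · simp [h0]
    · have hsq : t ^ 2 = (1 / 2 ^ b : ℝ) ^ 2 := by
        have : t ^ 2 * t = (1 / 2 ^ (2 * b) : ℝ) * t := by linear_combination h3
        have h2 := mul_right_cancel₀ h0 this
        rw [h2, div_pow, one_pow, ← pow_mul]
        ring_nf
      have hcomp : (2 : ℝ) ^ b * (1 / 2 ^ b) ^ 2 = 1 / 2 ^ b := by
        have : (2 : ℝ) ^ b ≠ 0 := by positivity
        field_simp
      rcases sq_eq_sq_iff_eq_or_eq_neg.mp hsq with h | h
      · rw [h, abs_of_pos (by positivity), h] at *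
        rw [hcomp]
      · rw [h, abs_neg, neg_sq, abs_of_pos (by positivity), hcomp]
  -- ∑ t² = trace(A²) = 2/2^(2b)
  have hsumsq : ∑ i, (hH.eigenvalues i) ^ 2 = 2 / 2 ^ (2 * b) := by
    have hspec := hH.spectral_theorem
    set U : Matrix (Bool × (Fin b → Bool)) (Bool × (Fin b → Bool)) ℂ :=
      hH.eigenvectorUnitary.val with hU
    set D : Matrix (Bool × (Fin b → Bool)) (Bool × (Fin b → Bool)) ℂ :=
      diagonal (RCLike.ofReal ∘ hH.eigenvalues) with hD
    have hUU : star U * U = 1 := Matrix.mem_unitaryGroup_iff'.mp hH.eigenvectorUnitary.property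
    have hAA : A * A = U * (D * D) * star U := by
      calc A * A = (U * D * star U) * (U * D * star U) := by rw [hspec]; rfl
        _ = U * D * (star U * U) * D * star U := by noncomm_ring
        _ = U * (D * D) * star U := by rw [hUU]; noncomm_ring
    have : trace (A * A) = trace (D * D) := by
      rw [hAA, Matrix.trace_mul_cycle, ← mul_assoc, hUU, one_mul]
    rw [htr] at this
    rw [hD, diagonal_mul_diagonal, trace_diagonal] at this
    have hre : ((∑ i, (hH.eigenvalues i) ^ 2 : ℝ) : ℂ) = ((2 / 2 ^ (2 * b) : ℝ) : ℂ) := by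
      push_cast
      rw [this]
      apply Finset.sum_congr rfl
      intro i _
      simp [pow_two]
    exact Complex.ofReal_inj.mp hre
  -- conclude
  calc ∑ i, |hH.eigenvalues i| = ∑ i, 2 ^ b * (hH.eigenvalues i) ^ 2 := by
        exact Finset.sum_congr rfl fun i _ => habs i
    _ = 2 ^ b * ∑ i, (hH.eigenvalues i) ^ 2 := by rw [Finset.mul_sum]
    _ = 2 ^ b * (2 / 2 ^ (2 * b)) := by rw [hsumsq]
    _ = 2 / 2 ^ b := by
        rw [two_mul, pow_add]
        have : (2 : ℝ) ^ b ≠ 0 := by positivity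
        field_simp
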